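/- Let φ₁, φ₂ : (0,∞) → (0,∞) be increasing, unbounded, concave functions with φ_i(R) ∈ o(R) and φ₁(R) ∈ o(φ₂(R)). Let X, Y₁, Y₂ be separated nets in ℝ^d such that there exists a bijection g : Y₁ → X with disp_R(g) ∈ O(φ₁(R)), while every bijection h : Y₂ → X satisfies disp_R(h) ∉ o(φ₂(R)). Then Y₁ and Y₂ are not bounded displacement equivalent. -/

import Mathlib

open Filter Metric Set Topology

noncomputable section

/-- A separated net in Euclidean space: separated and a net. -/
def SepNet {d : ℕ} (X : Set (EuclideanSpace ℝ (Fin d))) : Prop :=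
  (∃ δ > 0, ∀ x ∈ X, ∀ y ∈ X, x ≠ y → δ ≤ dist x y) ∧
  (∃ θ : ℝ, ∀ p : EuclideanSpace ℝ (Fin d), ∃ x ∈ X, dist p x ≤ θ)

/-- Displacement of `f` restricted to points of `X` of norm at most `R`
(set to `0` when the relevant set is empty, via `Real.sSup`). -/
def dispR {d : ℕ} (X : Set (EuclideanSpace ℝ (Fin d)))
    (f : EuclideanSpace ℝ (Fin d) → EuclideanSpace ℝ (Fin d)) (R : ℝ) : ℝ :=
  sSup ((fun x => dist (f x) x) '' (X ∩ Metric.closedBall 0 R))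

/-- A separated set meets every closed ball in a finite set. -/
lemma sep_finite_inter {d : ℕ} {s : Set (EuclideanSpace ℝ (Fin d))} {δ : ℝ} (hδ : 0 < δ)
    (hsep : ∀ x ∈ s, ∀ y ∈ s, x ≠ y → δ ≤ dist x y) (R : ℝ) :
    (s ∩ Metric.closedBall 0 R).Finite := by
  haveI : DiscreteTopology s :=
    DiscreteTopology.of_forall_le_dist hδ fun x y hxy =>
      hsep x x.2 y y.2 (fun h => hxy (Subtype.ext h))
  have hclosed : IsClosed s :=
    isClosed_of_pairwise_le_dist hδ fun x hx y hy hxy => hsep x hx y hy hxy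
  have := Metric.finite_isBounded_inter_isClosed
    (K := Metric.closedBall (0 : EuclideanSpace ℝ (Fin d)) R) (s := s)
    ⟨this⟩ Metric.isBounded_closedBall hclosed
  rwa [Set.inter_comm] at this

theorem stmt17 {d : ℕ} (φ₁ φ₂ : ℝ → ℝ)
    (h1pos : ∀ R > (0:ℝ), 0 < φ₁ R) (h2pos : ∀ R > (0:ℝ), 0 < φ₂ R)
    (h1mono : MonotoneOn φ₁ (Set.Ioi 0)) (h2mono : MonotoneOn φ₂ (Set.Ioi 0))
    (h1conc : ConcaveOn ℝ (Set.Ioi 0) φ₁) (h2conc : ConcaveOn ℝ (Set.Ioi 0) φ₂)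
    (h1top : Tendsto φ₁ atTop atTop) (h2top : Tendsto φ₂ atTop atTop)
    (h1o : Tendsto (fun R => φ₁ R / R) atTop (𝓝 0))
    (h2o : Tendsto (fun R => φ₂ R / R) atTop (𝓝 0))
    (h12 : Tendsto (fun R => φ₁ R / φ₂ R) atTop (𝓝 0))
    (X Y₁ Y₂ : Set (EuclideanSpace ℝ (Fin d)))
    (hX : SepNet X) (hY₁ : SepNet Y₁) (hY₂ : SepNet Y₂)
    (hg : ∃ g : EuclideanSpace ℝ (Fin d) → EuclideanSpace ℝ (Fin d),
      Set.BijOn g Y₁ X ∧ ∃ C > (0:ℝ), ∃ R₀ : ℝ, ∀ R ≥ R₀, dispR Y₁ g R ≤ C * φ₁ R)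
    (hh : ∀ h : EuclideanSpace ℝ (Fin d) → EuclideanSpace ℝ (Fin d),
      Set.BijOn h Y₂ X → ¬ Tendsto (fun R => dispR Y₂ h R / φ₂ R) atTop (𝓝 0)) :
    ¬ ∃ f : EuclideanSpace ℝ (Fin d) → EuclideanSpace ℝ (Fin d),
        Set.BijOn f Y₂ Y₁ ∧ ∃ D : ℝ, ∀ y ∈ Y₂, dist (f y) y ≤ D := by
  rintro ⟨f, hfbij, D, hD⟩
  obtain ⟨g, hgbij, C, hC, R₀, hgdisp⟩ := hg
  obtain ⟨δ₁, hδ₁, hsep₁⟩ := hY₁.1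
  set D' : ℝ := max D 1 with hD'def
  have hD'pos : (0:ℝ) < D' := lt_of_lt_of_le one_pos (le_max_right _ _)
  have hD' : ∀ y ∈ Y₂, dist (f y) y ≤ D' := fun y hy => (hD y hy).trans (le_max_left _ _)
  -- elementwise bound for g
  have hgel : ∀ R' ≥ R₀, ∀ z ∈ Y₁, ‖z‖ ≤ R' → dist (g z) z ≤ C * φ₁ R' := by
    intro R' hR' z hz hznorm
    have hfin := sep_finite_inter hδ₁ hsep₁ R'
    have hmem : dist (g z) z ∈ (fun x => dist (g x) x) '' (Y₁ ∩ Metric.closedBall 0 R') := by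
      exact ⟨z, ⟨hz, by simpa [Metric.mem_closedBall, dist_zero_right] using hznorm⟩, rfl⟩
    exact le_trans (le_csSup (hfin.image _).bddAbove hmem) (hgdisp R' hR')
  -- the composed bijection
  have hcomp : Set.BijOn (g ∘ f) Y₂ X := hgbij.comp hfbij
  refine hh (g ∘ f) hcomp ?_
  -- bound dispR of the composition
  have hbound : ∀ R ≥ max R₀ (2 * D'), dispR Y₂ (g ∘ f) R ≤ 2 * C * φ₁ R + D' := by
    intro R hR
    have hRR₀ : R ≥ R₀ := le_trans (le_max_left _ _) hR
    have hR2D : 2 * D' ≤ R := le_trans (le_max_right _ _) hR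
    have hRpos : (0:ℝ) < R := lt_of_lt_of_le (by linarith) hR2D
    have hRD'pos : (0:ℝ) < R + D' := by linarith
    -- concavity: φ₁ (R + D') ≤ 2 * φ₁ R
    have hconcstep : φ₁ (R + D') ≤ 2 * φ₁ R := by
      set t : ℝ := (R - D') / R with ht
      have htmem : 0 ≤ t := div_nonneg (by linarith) hRpos.le
      have ht1 : t ≤ 1 := by
        rw [ht, div_le_one hRpos]; linarith
      have hcomb : t • (R + D') + (1 - t) • D' = R := by
        simp only [smul_eq_mul, ht]; rw [div_mul_eq_mul_div, one_sub_div hRpos.ne', div_mul_eq_mul_div, ← add_div, div_eq_iff hRpos.ne']; ring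
      have := h1conc.2 (Set.mem_Ioi.2 hRD'pos) (Set.mem_Ioi.2 hD'pos) htmem
        (show (0:ℝ) ≤ 1 - t by linarith) (show t + (1 - t) = 1 by ring)
      rw [hcomb] at this
      have hφD' : 0 < φ₁ D' := h1pos _ hD'pos
      have hφRD' : 0 < φ₁ (R + D') := h1pos _ hRD'pos
      have ht2 : (1:ℝ)/2 ≤ t := by
        rw [ht, le_div_iff₀ hRpos]; linarith
      have h1 : t * φ₁ (R + D') ≤ φ₁ R := by
        have h2 : (0:ℝ) ≤ (1 - t) * φ₁ D' := mul_nonneg (by linarith) hφD'.le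
        simp only [smul_eq_mul] at this
        linarith
      nlinarith
    -- elementwise bound for composition
    refine Real.sSup_le ?_ (by nlinarith [h1pos R hRpos])
    rintro r ⟨y, ⟨hy, hyball⟩, rfl⟩
    have hynorm : ‖y‖ ≤ R := by simpa [Metric.mem_closedBall, dist_zero_right] using hyball
    have hfy : f y ∈ Y₁ := hfbij.mapsTo hy
    have hfynorm : ‖f y‖ ≤ R + D' := by
      have : dist (f y) 0 ≤ dist (f y) y + dist y 0 := dist_triangle _ _ _
      rw [dist_zero_right, dist_zero_right] at this
      have := hD' y hy
      linarith [dist_triangle (f y) y (0 : EuclideanSpace ℝ (Fin d)),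
        (by simpa [dist_zero_right] using (dist_triangle (f y) y (0 : EuclideanSpace ℝ (Fin d))) :
          ‖f y‖ ≤ dist (f y) y + ‖y‖)]
    have h1 : dist (g (f y)) (f y) ≤ C * φ₁ (R + D') :=
      hgel (R + D') (by linarith) (f y) hfy hfynorm
    calc dist ((g ∘ f) y) y ≤ dist (g (f y)) (f y) + dist (f y) y := dist_triangle _ _ _
      _ ≤ C * φ₁ (R + D') + D' := add_le_add h1 (hD' y hy)
      _ ≤ C * (2 * φ₁ R) + D' := by nlinarith
      _ = 2 * C * φ₁ R + D' := by ring
  -- squeeze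
  have htend : Tendsto (fun R => (2 * C * φ₁ R + D') / φ₂ R) atTop (𝓝 0) := by
    have h1 : Tendsto (fun R => 2 * C * (φ₁ R / φ₂ R)) atTop (𝓝 (2 * C * 0)) :=
      h12.const_mul (2 * C)
    have h2 : Tendsto (fun R => D' / φ₂ R) atTop (𝓝 0) :=
      Tendsto.div_atTop tendsto_const_nhds h2top
    have := h1.add h2
    rw [mul_zero, add_zero] at this
    refine this.congr' ?_
    filter_upwards [eventually_gt_atTop (0:ℝ)] with R hR
    have : φ₂ R ≠ 0 := (h2pos R hR).ne'
    field_simp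
  refine squeeze_zero' ?_ ?_ htend
  · filter_upwards [eventually_gt_atTop (0:ℝ)] with R hR
    have h2 : 0 < φ₂ R := h2pos R hR
    have hnn : (0:ℝ) ≤ dispR Y₂ (g ∘ f) R :=
      Real.sSup_nonneg (by rintro r ⟨y, _, rfl⟩; exact dist_nonneg)
    positivity
  · filter_upwards [eventually_ge_atTop (max R₀ (2 * D')), eventually_gt_atTop (0:ℝ)]
      with R hR hRpos
    exact div_le_div_of_nonneg_right (hbound R hR) (h2pos R hRpos).le
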